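/- For the one-dimensional Cucker–Smale system with communication rate ψ(r) = (1 + r²)^{−β} and β ≤ 1/2, unconditional flocking holds: for every initial datum, sup_t max_{i,j}|x_i(t) − x_j(t)| < ∞ and max_{i,j}|v_i(t) − v_j(t)| → 0 exponentially as t → ∞. -/

import Mathlib

open Real Set Finset

private lemma cs_identity' {n : ℕ} (a : Fin n → Fin n → ℝ) (hsym : ∀ i j, a i j = a j i)
    (u : Fin n → ℝ) (c : ℝ) :
    ∑ i, ∑ j, 2 * (u i - u j) *
      ((c * ∑ k, a i k * (u k - u i)) - (c * ∑ k, a j k * (u k - u j)))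
      = -(2 * c * n) * ∑ i, ∑ j, a i j * (u i - u j) ^ 2 := by
  set A : Fin n → ℝ := fun i => c * ∑ k, a i k * (u k - u i) with hA
  have swap : ∀ F : Fin n → Fin n → ℝ, (∑ i, ∑ j, F i j) = ∑ i, ∑ j, F j i :=
    fun F => Finset.sum_comm
  have hGs : ∀ i : Fin n, (∑ j, (u i - u j)) = (n : ℝ) * u i - ∑ j, u j := by
    intro i
    rw [Finset.sum_sub_distrib, Finset.sum_const, card_univ, Fintype.card_fin, nsmul_eq_mul]
  -- step 1
  have step1 : (∑ i, ∑ j, 2 * (u i - u j) * (A i - A j))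
      = 4 * ∑ i, ∑ j, (u i - u j) * A i := by
    have e1 : (∑ i, ∑ j, 2 * (u i - u j) * (A i - A j))
        = ∑ i, ∑ j, (2 * ((u i - u j) * A i) + 2 * ((u j - u i) * A j)) :=
      Finset.sum_congr rfl fun i _ => Finset.sum_congr rfl fun j _ => by ring
    have e2 : (∑ i : Fin n, ∑ j : Fin n, (u j - u i) * A j)
        = ∑ i : Fin n, ∑ j : Fin n, (u i - u j) * A i := swap _
    rw [e1]
    simp only [Finset.sum_add_distrib, ← Finset.mul_sum, e2]
    ring
  -- step 2
  have step2 : (∑ i : Fin n, ∑ j : Fin n, (u i - u j) * A i)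
      = c * ∑ i, ∑ k, a i k * (u k - u i) * ((n : ℝ) * u i - ∑ j, u j) := by
    simp only [hA]
    rw [Finset.mul_sum]
    refine Finset.sum_congr rfl fun i _ => ?_
    rw [← Finset.sum_mul, hGs i]
    simp only [Finset.mul_sum, Finset.sum_mul]
    exact Finset.sum_congr rfl fun k _ => by ring
  -- step 3 (symmetrization)
  have hswap : (∑ i, ∑ k, a i k * (u k - u i) * ((n : ℝ) * u i - ∑ j, u j))
      = ∑ i, ∑ k, a i k * (u i - u k) * ((n : ℝ) * u k - ∑ j, u j) := by
    rw [swap (fun i k => a i k * (u k - u i) * ((n : ℝ) * u i - ∑ j, u j))]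
    exact Finset.sum_congr rfl fun i _ => Finset.sum_congr rfl fun k _ => by rw [hsym k i]
  have hP : (∑ i, ∑ k, a i k * (u k - u i) * ((n : ℝ) * u i - ∑ j, u j)) * 2
      = -(n : ℝ) * ∑ i, ∑ j, a i j * (u i - u j) ^ 2 := by
    rw [mul_two]
    nth_rewrite 2 [hswap]
    simp only [← Finset.sum_add_distrib]
    have : (∑ i, ∑ k, (a i k * (u k - u i) * ((n : ℝ) * u i - ∑ j, u j)
            + a i k * (u i - u k) * ((n : ℝ) * u k - ∑ j, u j)))
        = ∑ i, ∑ k, (-(n : ℝ)) * (a i k * (u i - u k) ^ 2) :=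
      Finset.sum_congr rfl fun i _ => Finset.sum_congr rfl fun k _ => by ring
    rw [this]
    simp only [← Finset.mul_sum]
  rw [step1, step2]
  linear_combination 2 * c * hP


private lemma lyap_mono (β : ℝ) (hβ0 : 0 < β) (hβ : β ≤ 1 / 2) (X V X' V' : ℝ → ℝ)
    (hXd : ∀ t, HasDerivAt X (X' t) t) (hVd : ∀ t, HasDerivAt V (V' t) t)
    (hXnn : ∀ t, 0 ≤ X t) (hVnn : ∀ t, 0 ≤ V t)
    (hV'le : ∀ t, V' t ≤ -2 * ((1 + X t) ^ (-β)) * V t)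
    (hCS : ∀ t, X' t ≤ 2 * Real.sqrt (X t) * Real.sqrt (V t))
    (hVanti : Antitone V)
    (hX'0 : ∀ t, V t = 0 → X' t = 0)
    (b : ℝ) (t : ℝ) (ht : t ∈ Icc (0:ℝ) b) :
    Real.sqrt (V t) + (1/2) * Real.log (1 + X t)
      ≤ Real.sqrt (V 0) + (1/2) * Real.log (1 + X 0) := by
  set L : ℝ → ℝ := fun s => Real.sqrt (V s) + (1/2) * Real.log (1 + X s) with hL
  have hXpos : ∀ s : ℝ, (0:ℝ) < 1 + X s := fun s => by have := hXnn s; linarith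
  have hlog : ∀ s : ℝ, HasDerivAt (fun u => (1/2) * Real.log (1 + X u))
      ((1/2) * ((1 + X s)⁻¹ * (0 + X' s))) s := by
    intro s
    exact (((Real.hasDerivAt_log (hXpos s).ne').comp s
      ((hasDerivAt_const s (1:ℝ)).add (hXd s)))).const_mul (1/2)
  have hL' : ∀ s : ℝ, ∃ l, l ≤ 0 ∧ HasDerivWithinAt L l (Ici s) s := by
    intro s
    by_cases hV0 : V s = 0
    · refine ⟨0 + (1/2) * ((1 + X s)⁻¹ * (0 + X' s)), ?_, ?_⟩
      · rw [hX'0 s hV0]; simp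
      · have hVz : ∀ u ∈ Ici s, V u = 0 := fun u hu =>
          le_antisymm (hV0 ▸ hVanti hu) (hVnn u)
        have hw : HasDerivWithinAt (fun u => Real.sqrt (V u)) 0 (Ici s) s :=
          (hasDerivWithinAt_const s (Ici s) (0:ℝ)).congr
            (fun u hu => by rw [hVz u hu, Real.sqrt_zero])
            (by rw [hV0, Real.sqrt_zero])
        exact hw.add (hlog s).hasDerivWithinAt
    · have hVpos : 0 < V s := lt_of_le_of_ne (hVnn s) (Ne.symm hV0)
      have hsq : 0 < Real.sqrt (V s) := Real.sqrt_pos.mpr hVpos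
      have hw : HasDerivAt (fun u => Real.sqrt (V u)) (1 / (2 * Real.sqrt (V s)) * V' s) s :=
        (Real.hasDerivAt_sqrt hV0).comp s (hVd s)
      refine ⟨_, ?_, (hw.add (hlog s)).hasDerivWithinAt⟩
      -- show the derivative value is ≤ 0
      have hψ : (0:ℝ) < (1 + X s) ^ (-β) := Real.rpow_pos_of_pos (hXpos s) _
      have term1 : 1 / (2 * Real.sqrt (V s)) * V' s
          ≤ -((1 + X s) ^ (-β)) * Real.sqrt (V s) := by
        have h1 : 1 / (2 * Real.sqrt (V s)) * V' s
            ≤ 1 / (2 * Real.sqrt (V s)) * (-2 * ((1 + X s) ^ (-β)) * V s) :=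
          mul_le_mul_of_nonneg_left (hV'le s) (by positivity)
        have hc : Real.sqrt (V s) ≠ 0 := hsq.ne'
        have h2a : 1 / (2 * Real.sqrt (V s)) * (-2 * ((1 + X s) ^ (-β)) * V s)
            = -((1 + X s) ^ (-β)) * (V s / Real.sqrt (V s)) := by
          field_simp
        have h2 : 1 / (2 * Real.sqrt (V s)) * (-2 * ((1 + X s) ^ (-β)) * V s)
            = -((1 + X s) ^ (-β)) * Real.sqrt (V s) := by
          rw [h2a, Real.div_sqrt]
        linarith
      have key : (1 + X s)⁻¹ * Real.sqrt (X s) ≤ (1 + X s) ^ (-β) := by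
        have e1 : Real.sqrt (X s) ≤ (1 + X s) ^ ((1:ℝ)/2) := by
          rw [← Real.sqrt_eq_rpow]
          exact Real.sqrt_le_sqrt (by linarith [hXnn s])
        have e2 : (1 + X s)⁻¹ * ((1 + X s) ^ ((1:ℝ)/2))
            = (1 + X s) ^ (-(1:ℝ)/2) := by
          rw [← Real.rpow_neg_one, ← Real.rpow_add (hXpos s)]
          norm_num
        have e3 : (1 + X s) ^ (-(1:ℝ)/2) ≤ (1 + X s) ^ (-β) :=
          Real.rpow_le_rpow_of_exponent_le (by linarith [hXnn s]) (by linarith)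
        calc (1 + X s)⁻¹ * Real.sqrt (X s)
            ≤ (1 + X s)⁻¹ * ((1 + X s) ^ ((1:ℝ)/2)) :=
              mul_le_mul_of_nonneg_left e1 (inv_nonneg.mpr (hXpos s).le)
          _ = (1 + X s) ^ (-(1:ℝ)/2) := e2
          _ ≤ (1 + X s) ^ (-β) := e3
      have term2 : (1/2) * ((1 + X s)⁻¹ * (0 + X' s))
          ≤ ((1 + X s) ^ (-β)) * Real.sqrt (V s) := by
        have h1 : (1/2) * ((1 + X s)⁻¹ * (0 + X' s))
            ≤ (1/2) * ((1 + X s)⁻¹ * (2 * Real.sqrt (X s) * Real.sqrt (V s))) := by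
          refine mul_le_mul_of_nonneg_left
            (mul_le_mul_of_nonneg_left ?_ (inv_nonneg.mpr (hXpos s).le)) (by norm_num)
          linarith [hCS s]
        have h2 : (1/2) * ((1 + X s)⁻¹ * (2 * Real.sqrt (X s) * Real.sqrt (V s)))
            = ((1 + X s)⁻¹ * Real.sqrt (X s)) * Real.sqrt (V s) := by ring
        have h3 : ((1 + X s)⁻¹ * Real.sqrt (X s)) * Real.sqrt (V s)
            ≤ ((1 + X s) ^ (-β)) * Real.sqrt (V s) :=
          mul_le_mul_of_nonneg_right key (Real.sqrt_nonneg _)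
        linarith
      linarith
  choose l hl0 hld using hL'
  have hcont : ContinuousOn L (Icc 0 b) := by
    have hVdiff : Differentiable ℝ V := fun s => (hVd s).differentiableAt
    have hXdiff : Differentiable ℝ X := fun s => (hXd s).differentiableAt
    have hVc : Continuous V := hVdiff.continuous
    have hXc : Continuous X := hXdiff.continuous
    exact ((Real.continuous_sqrt.comp hVc).add (continuous_const.mul
      ((continuous_const.add hXc).log fun s => (hXpos s).ne'))).continuousOn
  have := le_gronwallBound_of_liminf_deriv_right_le (f := L) (f' := l)
    (δ := L 0) (K := 0) (ε := 0) (a := 0) (b := b) hcont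
    (fun s _ r hr => ((hld s).liminf_right_slope_le hr).mono
      (fun z hz => by rwa [slope_def_field, div_eq_inv_mul] at hz))
    le_rfl
    (fun s _ => by simpa using hl0 s)
    t ht
  simp only [gronwallBound_K0, zero_mul, add_zero, sub_zero] at this
  exact this


/-- Unconditional flocking (Ha–Liu) for the 1-D Cucker–Smale system with communication
rate `ψ(r) = (1+r²)^{-β}`, `0 < β ≤ 1/2`: positions stay uniformly bounded relative to
each other and velocity differences decay exponentially. -/
theorem stmt7 (N : ℕ) (hN : 0 < N) (β : ℝ) (hβ0 : 0 < β) (hβ : β ≤ 1 / 2)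
    (x v : Fin N → ℝ → ℝ)
    (hx : ∀ i t, HasDerivAt (x i) (v i t) t)
    (hv : ∀ i t, HasDerivAt (v i)
      ((N : ℝ)⁻¹ * ∑ j, ((1 + |x i t - x j t| ^ 2) ^ (-β)) * (v j t - v i t)) t) :
    (∃ B : ℝ, ∀ t ≥ (0 : ℝ), ∀ i j, |x i t - x j t| ≤ B) ∧
    ∃ C δ : ℝ, 0 < δ ∧ ∀ t ≥ (0 : ℝ), ∀ i j, |v i t - v j t| ≤ C * Real.exp (-δ * t) := by
  set A : Fin N → ℝ → ℝ := fun i t =>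
    (N : ℝ)⁻¹ * ∑ j, ((1 + |x i t - x j t| ^ 2) ^ (-β)) * (v j t - v i t) with hA
  set X : ℝ → ℝ := fun t => ∑ i, ∑ j, (x i t - x j t) ^ 2 with hX
  set V : ℝ → ℝ := fun t => ∑ i, ∑ j, (v i t - v j t) ^ 2 with hV
  set X' : ℝ → ℝ := fun t => ∑ i, ∑ j, 2 * (x i t - x j t) * (v i t - v j t) with hX'
  set V' : ℝ → ℝ := fun t => ∑ i, ∑ j, 2 * (v i t - v j t) * (A i t - A j t) with hV'
  have hvA : ∀ i t, HasDerivAt (v i) (A i t) t := hv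
  have hXd : ∀ t, HasDerivAt X (X' t) t := by
    intro t
    have h := HasDerivAt.fun_sum (fun i (_ : i ∈ Finset.univ) =>
      HasDerivAt.fun_sum (fun j (_ : j ∈ Finset.univ) =>
        (((hx i t).sub (hx j t)).pow 2)))
    refine h.congr_deriv ?_
    refine Finset.sum_congr rfl fun i _ => Finset.sum_congr rfl fun j _ => ?_
    push_cast [Pi.sub_apply]
    ring
  have hVd : ∀ t, HasDerivAt V (V' t) t := by
    intro t
    have h := HasDerivAt.fun_sum (fun i (_ : i ∈ Finset.univ) =>
      HasDerivAt.fun_sum (fun j (_ : j ∈ Finset.univ) =>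
        (((hvA i t).sub (hvA j t)).pow 2)))
    refine h.congr_deriv ?_
    refine Finset.sum_congr rfl fun i _ => Finset.sum_congr rfl fun j _ => ?_
    push_cast [Pi.sub_apply]
    ring
  have hident : ∀ t, V' t
      = -2 * ∑ i, ∑ j, ((1 + |x i t - x j t| ^ 2) ^ (-β)) * (v i t - v j t) ^ 2 := by
    intro t
    have hsym : ∀ i j, ((1 + |x i t - x j t| ^ 2) ^ (-β) : ℝ)
        = (1 + |x j t - x i t| ^ 2) ^ (-β) := by
      intro i j; rw [abs_sub_comm]
    have h := cs_identity' (fun i j => (1 + |x i t - x j t| ^ 2) ^ (-β)) hsym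
      (fun i => v i t) (N : ℝ)⁻¹
    have hNne : (N : ℝ) ≠ 0 := Nat.cast_ne_zero.mpr hN.ne'
    rw [hV']
    simp only []
    rw [h]
    field_simp
  have hψpos : ∀ t (i j : Fin N), (0:ℝ) < (1 + |x i t - x j t| ^ 2) ^ (-β) := by
    intro t i j
    exact Real.rpow_pos_of_pos (by positivity) _
  have hXnn : ∀ t, 0 ≤ X t := fun t =>
    Finset.sum_nonneg fun i _ => Finset.sum_nonneg fun j _ => sq_nonneg _
  have hVnn : ∀ t, 0 ≤ V t := fun t =>
    Finset.sum_nonneg fun i _ => Finset.sum_nonneg fun j _ => sq_nonneg _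
  have hXpos : ∀ t : ℝ, (0:ℝ) < 1 + X t := fun t => by have := hXnn t; linarith
  have hV'le : ∀ t, V' t ≤ -2 * ((1 + X t) ^ (-β)) * V t := by
    intro t
    rw [hident t]
    have hterm : ∀ i j : Fin N,
        ((1 + X t) ^ (-β)) * (v i t - v j t) ^ 2
          ≤ ((1 + |x i t - x j t| ^ 2) ^ (-β)) * (v i t - v j t) ^ 2 := by
      intro i j
      refine mul_le_mul_of_nonneg_right ?_ (sq_nonneg _)
      refine Real.rpow_le_rpow_of_nonpos (by positivity) ?_ (by linarith)
      have : |x i t - x j t| ^ 2 ≤ X t := by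
        rw [hX]
        calc |x i t - x j t| ^ 2 = (x i t - x j t) ^ 2 := sq_abs _
          _ ≤ ∑ j', (x i t - x j' t) ^ 2 :=
              Finset.single_le_sum (f := fun j' => (x i t - x j' t) ^ 2)
                (fun k _ => sq_nonneg _) (Finset.mem_univ j)
          _ ≤ ∑ i', ∑ j', (x i' t - x j' t) ^ 2 :=
              Finset.single_le_sum (f := fun i' => ∑ j', (x i' t - x j' t) ^ 2)
                (fun k _ => Finset.sum_nonneg fun _ _ => sq_nonneg _) (Finset.mem_univ i)
      linarith
    have hsum : ((1 + X t) ^ (-β)) * V t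
        ≤ ∑ i, ∑ j, ((1 + |x i t - x j t| ^ 2) ^ (-β)) * (v i t - v j t) ^ 2 := by
      rw [hV]
      simp only [Finset.mul_sum]
      exact Finset.sum_le_sum fun i _ => Finset.sum_le_sum fun j _ => hterm i j
    nlinarith [hsum]
  have hV'np : ∀ t, V' t ≤ 0 := by
    intro t
    rw [hident t]
    have : 0 ≤ ∑ i, ∑ j, ((1 + |x i t - x j t| ^ 2) ^ (-β)) * (v i t - v j t) ^ 2 :=
      Finset.sum_nonneg fun i _ => Finset.sum_nonneg fun j _ =>
        mul_nonneg (hψpos _ i j).le (sq_nonneg _)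
    linarith
  have hVdiff : Differentiable ℝ V := fun s => (hVd s).differentiableAt
  have hVanti : Antitone V := by
    refine antitone_of_deriv_nonpos hVdiff (fun s => ?_)
    rw [(hVd s).deriv]
    exact hV'np s
  have hCS : ∀ t, X' t ≤ 2 * Real.sqrt (X t) * Real.sqrt (V t) := by
    intro t
    have key : (∑ i, ∑ j, (x i t - x j t) * (v i t - v j t)) ^ 2
        ≤ (∑ i, ∑ j, (x i t - x j t) ^ 2) * (∑ i, ∑ j, (v i t - v j t) ^ 2) := by
      have h := Finset.sum_mul_sq_le_sq_mul_sq (Finset.univ : Finset (Fin N × Fin N))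
        (fun p => x p.1 t - x p.2 t) (fun p => v p.1 t - v p.2 t)
      simpa [← Finset.univ_product_univ, Finset.sum_product] using h
    have h1 : (∑ i, ∑ j, (x i t - x j t) * (v i t - v j t))
        ≤ Real.sqrt ((∑ i, ∑ j, (x i t - x j t) ^ 2) * (∑ i, ∑ j, (v i t - v j t) ^ 2)) := by
      calc (∑ i, ∑ j, (x i t - x j t) * (v i t - v j t))
          ≤ |∑ i, ∑ j, (x i t - x j t) * (v i t - v j t)| := le_abs_self _
        _ = Real.sqrt ((∑ i, ∑ j, (x i t - x j t) * (v i t - v j t)) ^ 2) :=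
            (Real.sqrt_sq_eq_abs _).symm
        _ ≤ _ := Real.sqrt_le_sqrt key
    rw [Real.sqrt_mul (hXnn t)] at h1
    have h2 : X' t = 2 * ∑ i, ∑ j, (x i t - x j t) * (v i t - v j t) := by
      rw [hX']
      simp only [Finset.mul_sum]
      exact Finset.sum_congr rfl fun i _ => Finset.sum_congr rfl fun j _ => by ring
    rw [h2]
    have hXe : Real.sqrt (X t) = Real.sqrt (∑ i, ∑ j, (x i t - x j t) ^ 2) := by rw [hX]
    have hVe : Real.sqrt (V t) = Real.sqrt (∑ i, ∑ j, (v i t - v j t) ^ 2) := by rw [hV]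
    rw [hXe, hVe]
    linarith
  have hX'0 : ∀ t, V t = 0 → X' t = 0 := by
    intro t hV0
    have hvz : ∀ i j : Fin N, v i t - v j t = 0 := by
      intro i j
      have h1 := (Finset.sum_eq_zero_iff_of_nonneg
        (fun i (_ : i ∈ Finset.univ) =>
          Finset.sum_nonneg fun j _ => sq_nonneg (v i t - v j t))).mp hV0 i (Finset.mem_univ i)
      have h2 := (Finset.sum_eq_zero_iff_of_nonneg
        (fun j (_ : j ∈ Finset.univ) => sq_nonneg (v i t - v j t))).mp h1 j (Finset.mem_univ j)
      exact pow_eq_zero_iff two_ne_zero |>.mp h2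
    rw [hX']
    refine Finset.sum_eq_zero fun i _ => Finset.sum_eq_zero fun j _ => ?_
    rw [hvz i j]
    ring
  clear_value A X V X' V'
  -- the Lyapunov bound
  set L0 : ℝ := Real.sqrt (V 0) + (1/2) * Real.log (1 + X 0) with hL0
  clear_value L0
  have hLyap : ∀ t ≥ (0:ℝ), Real.sqrt (V t) + (1/2) * Real.log (1 + X t) ≤ L0 := by
    intro t ht
    rw [hL0]
    exact lyap_mono β hβ0 hβ X V X' V' hXd hVd hXnn hVnn hV'le hCS hVanti hX'0 t t
      ⟨ht, le_refl t⟩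
  have hXb : ∀ t ≥ (0:ℝ), 1 + X t ≤ Real.exp (2 * L0) := by
    intro t ht
    have h1 := hLyap t ht
    have h2 : Real.log (1 + X t) ≤ 2 * L0 := by
      have h3 := Real.sqrt_nonneg (V t)
      nlinarith [h1, h3]
    calc 1 + X t = Real.exp (Real.log (1 + X t)) := (Real.exp_log (hXpos t)).symm
      _ ≤ Real.exp (2 * L0) := Real.exp_le_exp.mpr h2
  constructor
  · -- bounded positions
    refine ⟨Real.exp L0, fun t ht i j => ?_⟩
    have h1 : |x i t - x j t| ^ 2 ≤ X t := by
      rw [hX]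
      calc |x i t - x j t| ^ 2 = (x i t - x j t) ^ 2 := sq_abs _
        _ ≤ ∑ j', (x i t - x j' t) ^ 2 :=
            Finset.single_le_sum (f := fun j' => (x i t - x j' t) ^ 2)
              (fun k _ => sq_nonneg _) (Finset.mem_univ j)
        _ ≤ ∑ i', ∑ j', (x i' t - x j' t) ^ 2 :=
            Finset.single_le_sum (f := fun i' => ∑ j', (x i' t - x j' t) ^ 2)
              (fun k _ => Finset.sum_nonneg fun _ _ => sq_nonneg _) (Finset.mem_univ i)
    have h2 : |x i t - x j t| ^ 2 ≤ Real.exp (2 * L0) := by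
      have := hXb t ht
      linarith
    calc |x i t - x j t| = Real.sqrt (|x i t - x j t| ^ 2) :=
          (Real.sqrt_sq (abs_nonneg _)).symm
      _ ≤ Real.sqrt (Real.exp (2 * L0)) := Real.sqrt_le_sqrt h2
      _ = Real.exp L0 := by
          rw [show (2:ℝ) * L0 = L0 + L0 by ring, Real.exp_add,
            Real.sqrt_mul_self (Real.exp_nonneg _)]
  · -- exponential decay
    set δ : ℝ := (Real.exp (2 * L0)) ^ (-β) with hδ
    have hδpos : 0 < δ := Real.rpow_pos_of_pos (Real.exp_pos _) _
    have hψδall : ∀ s ≥ (0:ℝ), δ ≤ (1 + X s) ^ (-β) := fun s hs =>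
      Real.rpow_le_rpow_of_nonpos (hXpos s) (hXb s hs) (neg_nonpos.mpr hβ0.le)
    clear_value δ
    refine ⟨Real.sqrt (V 0), δ, hδpos, fun t ht i j => ?_⟩
    -- Gronwall for V on [0, t]
    have hgd : ∀ s, HasDerivAt (fun u => V u * Real.exp (2 * δ * u))
        (V' s * Real.exp (2 * δ * s) + V s * (Real.exp (2 * δ * s) * (2 * δ * 1))) s := by
      intro s
      exact (hVd s).mul (((hasDerivAt_id s).const_mul (2 * δ)).exp)
    have hganti : AntitoneOn (fun u => V u * Real.exp (2 * δ * u)) (Ici 0) := by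
      refine antitoneOn_of_deriv_nonpos (convex_Ici 0) ?_ ?_ ?_
      · exact (Continuous.mul hVdiff.continuous
          (Real.continuous_exp.comp (continuous_const.mul continuous_id))).continuousOn
      · intro s _
        exact ((hgd s).differentiableAt).differentiableWithinAt
      · intro s hs
        rw [interior_Ici] at hs
        have hs0 : (0:ℝ) ≤ s := le_of_lt hs
        rw [(hgd s).deriv]
        have hψδs : δ ≤ (1 + X s) ^ (-β) := hψδall s hs0
        have h1 : V' s ≤ -2 * δ * V s := by
          have := hV'le s
          nlinarith [mul_nonneg (sub_nonneg.mpr hψδs) (hVnn s)]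
        have h2 : V' s + 2 * δ * V s ≤ 0 := by linarith
        have h3 := mul_nonpos_of_nonpos_of_nonneg h2 (Real.exp_nonneg (2 * δ * s))
        nlinarith [h3]
    have hVt : V t ≤ V 0 * Real.exp (-(2 * δ * t)) := by
      have h1 := hganti (mem_Ici.mpr le_rfl) (mem_Ici.mpr ht) ht
      simp only [mul_zero, Real.exp_zero, mul_one] at h1
      have h2 : (0:ℝ) < Real.exp (2 * δ * t) := Real.exp_pos _
      rw [Real.exp_neg]
      rw [← sub_nonneg]
      have : V 0 * (Real.exp (2 * δ * t))⁻¹ - V t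
          = (V 0 - V t * Real.exp (2 * δ * t)) * (Real.exp (2 * δ * t))⁻¹ := by
        field_simp
      rw [this]
      exact mul_nonneg (by linarith) (inv_nonneg.mpr h2.le)
    have hdij : |v i t - v j t| ^ 2 ≤ V t := by
      rw [hV]
      calc |v i t - v j t| ^ 2 = (v i t - v j t) ^ 2 := sq_abs _
        _ ≤ ∑ j', (v i t - v j' t) ^ 2 :=
            Finset.single_le_sum (f := fun j' => (v i t - v j' t) ^ 2)
              (fun k _ => sq_nonneg _) (Finset.mem_univ j)
        _ ≤ ∑ i', ∑ j', (v i' t - v j' t) ^ 2 :=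
            Finset.single_le_sum (f := fun i' => ∑ j', (v i' t - v j' t) ^ 2)
              (fun k _ => Finset.sum_nonneg fun _ _ => sq_nonneg _) (Finset.mem_univ i)
    have hsplit : Real.exp (-(2 * δ * t)) = Real.exp (-δ * t) * Real.exp (-δ * t) := by
      rw [← Real.exp_add]
      ring_nf
    calc |v i t - v j t| = Real.sqrt (|v i t - v j t| ^ 2) :=
          (Real.sqrt_sq (abs_nonneg _)).symm
      _ ≤ Real.sqrt (V 0 * Real.exp (-(2 * δ * t))) :=
          Real.sqrt_le_sqrt (le_trans hdij hVt)
      _ = Real.sqrt (V 0) * Real.exp (-δ * t) := by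
          rw [hsplit, Real.sqrt_mul (hVnn 0), Real.sqrt_mul_self (Real.exp_nonneg _)]
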